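/- Let r ∈ ℂ, F ∈ A_r(Γ,v) a holomorphic automorphic form, z₀ ∈ ℍ. Define Q_F(t) = ∫_{z₀}^{t̄} (z-t)^{r-2} F(z) dz for t ∈ ℍ⁻ (path in ℍ from z₀ to t̄, branch arg(z-t) ∈ (-π/2, 3π/2)). Then for every γ ∈ Γ, Q_F|_{v,2-r}(γ - 1) = ψ^{z₀}_{F,γ}, where ψ^{z₀}_{F,γ}(t) = ∫_{γ^{-1}z₀}^{z₀} (z-t)^{r-2} F(z) dz. -/

import Mathlib

open Complex

noncomputable def mdenom (g : Matrix.SpecialLinearGroup (Fin 2) ℝ) (z : ℂ) : ℂ :=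
  (g.1 1 0 : ℂ) * z + (g.1 1 1 : ℂ)

noncomputable def mact (g : Matrix.SpecialLinearGroup (Fin 2) ℝ) (z : ℂ) : ℂ :=
  ((g.1 0 0 : ℂ) * z + (g.1 0 1 : ℂ)) / mdenom g z

/-- Complex power with the branch `arg ∈ [-π, π)`. -/
noncomputable def cpowLHP (w s : ℂ) : ℂ :=
  if w.arg = Real.pi then Complex.exp (s * (Complex.log w - 2 * (Real.pi : ℂ) * Complex.I))
  else w ^ s

/-- The integral `∫_{w₁}^{w₂} (z - t)^(r-2) F z dz` along the straight segment. -/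
noncomputable def segInt (r : ℂ) (F : ℂ → ℂ) (w₁ w₂ t : ℂ) : ℂ :=
  ∫ s in (0:ℝ)..1,
    (w₂ - w₁) * ((w₁ + (s : ℂ) * (w₂ - w₁) - t) ^ (r - 2)) *
      F (w₁ + (s : ℂ) * (w₂ - w₁))

/-! ### Auxiliary material: a primitive for a holomorphic function on the upper half plane -/

noncomputable def primH (f : ℂ → ℂ) (p z : ℂ) : ℂ :=
  (∫ u : ℝ in p.re..z.re, f (u + p.im * I)) + I * ∫ s : ℝ in p.im..z.im, f (z.re + s * I)

section prim
variable {f : ℂ → ℂ} (hf : DifferentiableOn ℂ f {z : ℂ | 0 < z.im})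

lemma horiz_intble (hf : ContinuousOn f {z : ℂ | 0 < z.im}) {y : ℝ} (hy : 0 < y) (x₁ x₂ : ℝ) :
    IntervalIntegrable (fun u : ℝ => f (u + y * I)) MeasureTheory.volume x₁ x₂ := by
  apply ContinuousOn.intervalIntegrable
  apply hf.comp (by fun_prop) (fun u _ => by simp [hy])

lemma vert_intble (hf : ContinuousOn f {z : ℂ | 0 < z.im}) {x : ℝ} {y₁ y₂ : ℝ} (h1 : 0 < y₁)
    (h2 : 0 < y₂) : IntervalIntegrable (fun s : ℝ => f (x + s * I)) MeasureTheory.volume y₁ y₂ := by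
  apply ContinuousOn.intervalIntegrable
  apply hf.comp (by fun_prop)
  intro s hs
  simp only [Set.mem_setOf_eq, add_im, ofReal_im, mul_im, ofReal_re, I_im, I_re, mul_one, mul_zero]
  rw [Set.uIcc_eq_union] at hs
  rcases hs with h | h
  · rcases Set.mem_Icc.mp h with ⟨ha, _⟩; simpa using lt_of_lt_of_le h1 ha
  · rcases Set.mem_Icc.mp h with ⟨ha, _⟩; simpa using lt_of_lt_of_le h2 ha

include hf in
lemma primH_sub {p z w : ℂ} (hp : 0 < p.im) (hz : 0 < z.im) (hw : 0 < w.im) :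
    primH f p w - primH f p z =
      (∫ u : ℝ in z.re..w.re, f (u + z.im * I)) + I * ∫ s : ℝ in z.im..w.im, f (w.re + s * I) := by
  have hc := hf.continuousOn
  have R := Complex.integral_boundary_rect_eq_zero_of_differentiableOn f
      (z.re + p.im * I) (w.re + z.im * I) (by
    apply hf.mono
    intro ζ hζ
    rw [Complex.mem_reProdIm] at hζ
    have := hζ.2
    simp only [add_im, ofReal_im, mul_im, ofReal_re, I_im, I_re, mul_one, mul_zero, zero_add,
      add_zero] at this
    rw [Set.uIcc_eq_union] at this
    rcases this with h | h
    · exact lt_of_lt_of_le hp (Set.mem_Icc.mp h).1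
    · exact lt_of_lt_of_le hz (Set.mem_Icc.mp h).1)
  simp only [add_re, ofReal_re, mul_re, I_re, mul_zero, ofReal_im, I_im, mul_one, zero_sub,
    add_im, mul_im, zero_add, smul_eq_mul, sub_zero, mul_one, neg_zero, add_zero] at R
  have h1 : (∫ u : ℝ in p.re..w.re, f (u + p.im * I)) =
      (∫ u : ℝ in p.re..z.re, f (u + p.im * I)) + ∫ u : ℝ in z.re..w.re, f (u + p.im * I) :=
    (intervalIntegral.integral_add_adjacent_intervals (horiz_intble hc hp _ _)
      (horiz_intble hc hp _ _)).symm
  have h2 : (∫ s : ℝ in p.im..w.im, f (w.re + s * I)) =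
      (∫ s : ℝ in p.im..z.im, f (w.re + s * I)) + ∫ s : ℝ in z.im..w.im, f (w.re + s * I) :=
    (intervalIntegral.integral_add_adjacent_intervals (vert_intble hc hp hz)
      (vert_intble hc hz hw)).symm
  simp only [primH]
  rw [h1, h2]
  linear_combination R

lemma abs_sub_le_of_uIoc {x x' u : ℝ} (hu : u ∈ Set.uIoc x x') : |u - x| ≤ |x' - x| := by
  rw [Set.mem_uIoc] at hu
  rcases hu with ⟨h1, h2⟩ | ⟨h1, h2⟩
  · rw [_root_.abs_of_nonneg (by linarith : (0:ℝ) ≤ u - x),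
      _root_.abs_of_nonneg (by linarith : (0:ℝ) ≤ x' - x)]; linarith
  · rw [_root_.abs_of_nonpos (by linarith : u - x ≤ 0),
      _root_.abs_of_nonpos (by linarith : x' - x ≤ 0)]; linarith

include hf in
lemma primH_hasDerivAt {p z : ℂ} (hp : 0 < p.im) (hz : 0 < z.im) :
    HasDerivAt (primH f p) (f z) z := by
  rw [hasDerivAt_iff_isLittleO, Asymptotics.isLittleO_iff]
  intro ε hε
  have hcf : ContinuousAt f z :=
    hf.continuousOn.continuousAt ((isOpen_lt continuous_const Complex.continuous_im).mem_nhds hz)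
  rcases Metric.continuousAt_iff.mp hcf (ε / 2) (by linarith) with ⟨δ₁, hδ₁, hcont⟩
  set δ : ℝ := min (δ₁ / 2) (z.im / 2) with hδdef
  have hδ : 0 < δ := lt_min (by linarith) (by linarith)
  filter_upwards [Metric.ball_mem_nhds z hδ] with w hw
  rw [Metric.mem_ball, dist_eq_norm] at hw
  have hwz2 : 2 * ‖w - z‖ < δ₁ := by
    have : ‖w - z‖ < δ₁ / 2 := lt_of_lt_of_le hw (min_le_left _ _)
    linarith
  have hwim : 0 < w.im := by
    have h1 : |(w - z).im| ≤ ‖w - z‖ := Complex.abs_im_le_norm _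
    have h2 : ‖w - z‖ < z.im / 2 := lt_of_lt_of_le hw (min_le_right _ _)
    have : (w - z).im = w.im - z.im := by simp
    rw [this] at h1
    rcases abs_le.mp h1 with ⟨h3, _⟩
    linarith
  have hhoriz : ∀ u ∈ Set.uIoc z.re w.re, ‖f (↑u + ↑z.im * I) - f z‖ ≤ ε / 2 := by
    intro u hu
    have hd : dist ((u : ℂ) + z.im * I) z < δ₁ := by
      have : (u : ℂ) + z.im * I - z = ((u - z.re : ℝ) : ℂ) := by
        have := Complex.re_add_im z
        push_cast
        linear_combination this
      rw [dist_eq_norm, this]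
      have : ‖((u - z.re : ℝ) : ℂ)‖ = |u - z.re| := by
        rw [Complex.norm_real, Real.norm_eq_abs]
      rw [this]
      calc |u - z.re| ≤ |w.re - z.re| := abs_sub_le_of_uIoc hu
        _ = |(w - z).re| := by simp
        _ ≤ ‖w - z‖ := Complex.abs_re_le_norm _
        _ < δ₁ := by linarith [norm_nonneg (w - z)]
    have := hcont hd
    rw [dist_eq_norm] at this
    exact this.le
  have hvert : ∀ s ∈ Set.uIoc z.im w.im, ‖f (↑w.re + ↑s * I) - f z‖ ≤ ε / 2 := by
    intro s hs
    have hd : dist ((w.re : ℂ) + s * I) z < δ₁ := by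
      have heq : (w.re : ℂ) + s * I - z = ((w.re - z.re : ℝ) : ℂ) + ((s - z.im : ℝ) : ℂ) * I := by
        have := Complex.re_add_im z
        push_cast
        linear_combination this
      rw [dist_eq_norm, heq]
      have hb1 : ‖((w.re - z.re : ℝ) : ℂ)‖ = |w.re - z.re| := by
        rw [Complex.norm_real, Real.norm_eq_abs]
      have hb2 : ‖((s - z.im : ℝ) : ℂ) * I‖ = |s - z.im| := by
        rw [norm_mul, Complex.norm_I, mul_one, Complex.norm_real,
          Real.norm_eq_abs]
      calc ‖((w.re - z.re : ℝ) : ℂ) + ((s - z.im : ℝ) : ℂ) * I‖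
          ≤ ‖((w.re - z.re : ℝ) : ℂ)‖ + ‖((s - z.im : ℝ) : ℂ) * I‖ := norm_add_le _ _
        _ = |w.re - z.re| + |s - z.im| := by rw [hb1, hb2]
        _ ≤ ‖w - z‖ + ‖w - z‖ := by
            have e1 : |w.re - z.re| = |(w - z).re| := by simp
            have e2 : |s - z.im| ≤ |w.im - z.im| := abs_sub_le_of_uIoc hs
            have e3 : |w.im - z.im| = |(w - z).im| := by simp
            exact add_le_add (by rw [e1]; exact Complex.abs_re_le_norm _)
              (le_trans (e2.trans_eq e3) (Complex.abs_im_le_norm _))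
        _ < δ₁ := by linarith
    have := hcont hd
    rw [dist_eq_norm] at this
    exact this.le
  have hsub := primH_sub hf hp hz hwim
  have hcOn : ContinuousOn f {z : ℂ | 0 < z.im} := hf.continuousOn
  have hintH : IntervalIntegrable (fun u : ℝ => f (u + z.im * I)) MeasureTheory.volume
      z.re w.re := by
    apply ContinuousOn.intervalIntegrable
    exact hcOn.comp (by fun_prop) (fun u _ => by simp [hz])
  have hintV : IntervalIntegrable (fun s : ℝ => f (w.re + s * I)) MeasureTheory.volume
      z.im w.im := by
    apply ContinuousOn.intervalIntegrable
    apply hcOn.comp (by fun_prop)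
    intro s hs
    simp only [Set.mem_setOf_eq, add_im, ofReal_im, mul_im, ofReal_re, I_im, I_re, mul_one,
      mul_zero, zero_add, add_zero]
    rw [Set.uIcc_eq_union] at hs
    rcases hs with h | h
    · exact lt_of_lt_of_le hz (Set.mem_Icc.mp h).1
    · exact lt_of_lt_of_le hwim (Set.mem_Icc.mp h).1
  have key : primH f p w - primH f p z - (w - z) • f z =
      (∫ u : ℝ in z.re..w.re, (f (u + z.im * I) - f z)) +
        I * ∫ s : ℝ in z.im..w.im, (f (w.re + s * I) - f z) := by
    rw [intervalIntegral.integral_sub hintH intervalIntegrable_const,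
      intervalIntegral.integral_sub hintV intervalIntegrable_const,
      intervalIntegral.integral_const, intervalIntegral.integral_const, hsub]
    have hwz : w - z = ((w.re - z.re : ℝ) : ℂ) + ((w.im - z.im : ℝ) : ℂ) * I := by
      have h1 := Complex.re_add_im z
      have h2 := Complex.re_add_im w
      push_cast
      linear_combination h1 - h2
    rw [smul_eq_mul, hwz]
    simp only [Complex.real_smul]
    push_cast
    ring
  rw [key]
  have hb1 : ‖∫ u : ℝ in z.re..w.re, (f (u + z.im * I) - f z)‖ ≤ ε / 2 * |w.re - z.re| :=
    intervalIntegral.norm_integral_le_of_norm_le_const hhoriz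
  have hb2 : ‖∫ s : ℝ in z.im..w.im, (f (w.re + s * I) - f z)‖ ≤ ε / 2 * |w.im - z.im| :=
    intervalIntegral.norm_integral_le_of_norm_le_const hvert
  have hre : |w.re - z.re| ≤ ‖w - z‖ := by
    have : |w.re - z.re| = |(w - z).re| := by simp
    rw [this]; exact Complex.abs_re_le_norm _
  have him : |w.im - z.im| ≤ ‖w - z‖ := by
    have : |w.im - z.im| = |(w - z).im| := by simp
    rw [this]; exact Complex.abs_im_le_norm _
  calc ‖(∫ u : ℝ in z.re..w.re, (f (u + z.im * I) - f z)) +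
        I * ∫ s : ℝ in z.im..w.im, (f (w.re + s * I) - f z)‖
      ≤ ‖∫ u : ℝ in z.re..w.re, (f (u + z.im * I) - f z)‖ +
        ‖I * ∫ s : ℝ in z.im..w.im, (f (w.re + s * I) - f z)‖ := norm_add_le _ _
    _ ≤ ε / 2 * |w.re - z.re| + ε / 2 * |w.im - z.im| := by
        rw [norm_mul, Complex.norm_I, one_mul]
        exact add_le_add hb1 hb2
    _ ≤ ε / 2 * ‖w - z‖ + ε / 2 * ‖w - z‖ := by gcongr
    _ = ε * ‖w - z‖ := by ring
end prim

/-! ### Segment integrals via primitives -/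

lemma seg_mem_U {w₁ w₂ : ℂ} (h1 : 0 < w₁.im) (h2 : 0 < w₂.im) {s : ℝ}
    (hs : s ∈ Set.uIcc (0:ℝ) 1) : 0 < (w₁ + (s : ℂ) * (w₂ - w₁)).im := by
  rw [Set.uIcc_of_le zero_le_one, Set.mem_Icc] at hs
  have : (w₁ + (s : ℂ) * (w₂ - w₁)).im = (1 - s) * w₁.im + s * w₂.im := by
    simp [Complex.add_im, Complex.mul_im]; ring
  rw [this]
  rcases eq_or_lt_of_le hs.1 with h | h
  · simp [← h, h1]
  · nlinarith [hs.2, h1, h2]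

lemma integrand_diff {F : ℂ → ℂ} (hF : DifferentiableOn ℂ F {z : ℂ | 0 < z.im})
    {t : ℂ} (ht : t.im < 0) (r : ℂ) :
    DifferentiableOn ℂ (fun z => (z - t) ^ (r - 2) * F z) {z : ℂ | 0 < z.im} := by
  intro z hz
  have h1 : DifferentiableAt ℂ (fun z : ℂ => (z - t) ^ (r - 2)) z := by
    apply DifferentiableAt.cpow (differentiableAt_id.sub_const t) (differentiableAt_const _)
    rw [Complex.mem_slitPlane_iff]
    right
    simp only [Complex.sub_im]
    have : 0 < z.im := hz
    intro h; rw [sub_eq_zero] at h; exact absurd (h ▸ this) (lt_asymm ht)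
  exact (h1.differentiableWithinAt).mul (hF z hz)

/-- FTC along a segment inside the upper half plane, for any primitive `G` of `g`. -/
lemma segInt_eq_sub {F G g : ℂ → ℂ} {r t : ℂ}
    (hg : ∀ z : ℂ, 0 < z.im → g z = (z - t) ^ (r - 2) * F z)
    (hgc : ContinuousOn g {z : ℂ | 0 < z.im})
    (hG : ∀ z : ℂ, 0 < z.im → HasDerivAt G (g z) z)
    {w₁ w₂ : ℂ} (h1 : 0 < w₁.im) (h2 : 0 < w₂.im) :
    segInt r F w₁ w₂ t = G w₂ - G w₁ := by
  have hseg : ∀ s : ℝ, s ∈ Set.uIcc (0:ℝ) 1 → 0 < (w₁ + (s : ℂ) * (w₂ - w₁)).im :=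
    fun s hs => seg_mem_U h1 h2 hs
  have hphi : ∀ s : ℝ, HasDerivAt (fun s : ℝ => w₁ + (s : ℂ) * (w₂ - w₁)) (w₂ - w₁) s := by
    intro s
    have : (fun s : ℝ => w₁ + (s : ℂ) * (w₂ - w₁)) = fun s : ℝ => w₁ + s • (w₂ - w₁) := by
      funext s; rw [Complex.real_smul]
    rw [this]
    simpa using ((hasDerivAt_id s).smul_const (w₂ - w₁)).const_add w₁
  have hd : ∀ s ∈ Set.uIcc (0:ℝ) 1,
      HasDerivAt (fun s : ℝ => G (w₁ + (s : ℂ) * (w₂ - w₁)))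
        ((w₂ - w₁) * ((w₁ + (s : ℂ) * (w₂ - w₁) - t) ^ (r - 2)) * F (w₁ + (s : ℂ) * (w₂ - w₁)))
        s := by
    intro s hs
    have := (hG _ (hseg s hs)).scomp s (hphi s)
    rw [smul_eq_mul, hg _ (hseg s hs)] at this
    refine this.congr_deriv ?_
    ring
  have hint : IntervalIntegrable
      (fun s : ℝ => (w₂ - w₁) * ((w₁ + (s : ℂ) * (w₂ - w₁) - t) ^ (r - 2)) *
        F (w₁ + (s : ℂ) * (w₂ - w₁))) MeasureTheory.volume 0 1 := by
    apply ContinuousOn.intervalIntegrable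
    have hc : ContinuousOn (fun s : ℝ => g (w₁ + (s : ℂ) * (w₂ - w₁))) (Set.uIcc (0:ℝ) 1) :=
      hgc.comp (by fun_prop) (fun s hs => hseg s hs)
    have : ContinuousOn (fun s : ℝ => (w₂ - w₁) * g (w₁ + (s : ℂ) * (w₂ - w₁)))
        (Set.uIcc (0:ℝ) 1) := continuousOn_const.mul hc
    apply this.congr
    intro s hs
    simp only
    rw [hg _ (hseg s hs)]
    ring
  have hres := intervalIntegral.integral_eq_sub_of_hasDerivAt hd hint
  have e1 : w₁ + ((1:ℝ):ℂ) * (w₂ - w₁) = w₂ := by push_cast; ring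
  have e0 : w₁ + ((0:ℝ):ℂ) * (w₂ - w₁) = w₁ := by push_cast; ring
  rw [segInt, hres, e1, e0]

/-! ### Möbius transformation lemmas -/

section moebius
variable (γ : Matrix.SpecialLinearGroup (Fin 2) ℝ)

lemma detR : γ.1 0 0 * γ.1 1 1 - γ.1 0 1 * γ.1 1 0 = 1 := by
  have := γ.2
  rwa [Matrix.det_fin_two] at this

lemma detC : (γ.1 0 0 : ℂ) * (γ.1 1 1 : ℂ) - (γ.1 0 1 : ℂ) * (γ.1 1 0 : ℂ) = 1 := by
  exact_mod_cast detR γ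

lemma mdenom_im (z : ℂ) : (mdenom γ z).im = γ.1 1 0 * z.im := by
  simp [mdenom]

lemma mdenom_ne_zero {z : ℂ} (hz : z.im ≠ 0) : mdenom γ z ≠ 0 := by
  intro h
  have him : γ.1 1 0 * z.im = 0 := by rw [← mdenom_im γ z, h]; simp
  have hc : γ.1 1 0 = 0 := by
    rcases mul_eq_zero.mp him with h' | h'
    · exact h'
    · exact absurd h' hz
  have hre : γ.1 1 0 * z.re + γ.1 1 1 = 0 := by
    have := congrArg Complex.re h
    simpa [mdenom] using this
  have hd : γ.1 1 1 = 0 := by rw [hc] at hre; linarith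
  have := detR γ
  rw [hc, hd] at this
  simp at this

lemma mact_im {z : ℂ} (hz : z.im ≠ 0) :
    (mact γ z).im = z.im / Complex.normSq (mdenom γ z) := by
  have hB : mdenom γ z ≠ 0 := mdenom_ne_zero γ hz
  rw [mact, Complex.div_im]
  have h1 : ((γ.1 0 0 : ℂ) * z + (γ.1 0 1 : ℂ)).im = γ.1 0 0 * z.im := by simp
  have h2 : ((γ.1 0 0 : ℂ) * z + (γ.1 0 1 : ℂ)).re = γ.1 0 0 * z.re + γ.1 0 1 := by simp
  have h3 : (mdenom γ z).re = γ.1 1 0 * z.re + γ.1 1 1 := by simp [mdenom]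
  rw [h1, h2, h3, mdenom_im, div_sub_div_same]
  congr 1
  have := detR γ
  linear_combination z.im * this

lemma mact_sub {z w : ℂ} (hz : z.im ≠ 0) (hw : w.im ≠ 0) :
    mact γ z - mact γ w = (z - w) / (mdenom γ z * mdenom γ w) := by
  have hBz : mdenom γ z ≠ 0 := mdenom_ne_zero γ hz
  have hBw : mdenom γ w ≠ 0 := mdenom_ne_zero γ hw
  rw [mact, mact, div_sub_div _ _ hBz hBw]
  congr 1
  simp only [mdenom]
  linear_combination (z - w) * detC γ

lemma mact_conj (z : ℂ) : mact γ (starRingEnd ℂ z) = starRingEnd ℂ (mact γ z) := by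
  simp [mact, mdenom, map_div₀, map_add, map_mul, Complex.conj_ofReal]

lemma mact_one (z : ℂ) : mact 1 z = z := by
  simp [mact, mdenom, Matrix.SpecialLinearGroup.coe_one, Matrix.one_apply]

lemma mact_apply_div (g : Matrix.SpecialLinearGroup (Fin 2) ℝ) (N B : ℂ) (hB : B ≠ 0)
    (hden : (g.1 1 0 : ℂ) * (N / B) + (g.1 1 1 : ℂ) ≠ 0) :
    mact g (N / B) =
      ((g.1 0 0 : ℂ) * N + (g.1 0 1 : ℂ) * B) / ((g.1 1 0 : ℂ) * N + (g.1 1 1 : ℂ) * B) := by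
  have hden2 : (g.1 1 0 : ℂ) * N + (g.1 1 1 : ℂ) * B ≠ 0 := by
    have heq : (g.1 1 0 : ℂ) * N + (g.1 1 1 : ℂ) * B = B * ((g.1 1 0 : ℂ) * (N / B) + g.1 1 1) := by
      field_simp
    rw [heq]
    exact mul_ne_zero hB hden
  rw [mact, mdenom, div_eq_div_iff hden hden2]
  field_simp

lemma mact_mul (g h : Matrix.SpecialLinearGroup (Fin 2) ℝ) {z : ℂ} (hz : z.im ≠ 0) :
    mact (g * h) z = mact g (mact h z) := by
  have hBh : mdenom h z ≠ 0 := mdenom_ne_zero h hz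
  have himh : (mact h z).im ≠ 0 := by
    rw [mact_im h hz]
    exact div_ne_zero hz (by simpa [Complex.normSq_eq_zero] using hBh)
  have hBg : mdenom g (mact h z) ≠ 0 := mdenom_ne_zero g himh
  have hBgh : mdenom (g * h) z ≠ 0 := mdenom_ne_zero (g * h) hz
  have hent : ∀ i j, ((g * h).1 i j : ℂ) =
      (g.1 i 0 : ℂ) * (h.1 0 j : ℂ) + (g.1 i 1 : ℂ) * (h.1 1 j : ℂ) := by
    intro i j
    have : (g * h).1 i j = g.1 i 0 * h.1 0 j + g.1 i 1 * h.1 1 j := by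
      rw [Matrix.SpecialLinearGroup.coe_mul, Matrix.mul_apply, Fin.sum_univ_two]
    rw [this]; push_cast; ring
  have hX : mact h z = ((h.1 0 0 : ℂ) * z + (h.1 0 1 : ℂ)) / mdenom h z := rfl
  have hden : (g.1 1 0 : ℂ) * (((h.1 0 0 : ℂ) * z + (h.1 0 1 : ℂ)) / mdenom h z) +
      (g.1 1 1 : ℂ) ≠ 0 := by
    rw [← hX]
    exact hBg
  rw [hX, mact_apply_div g _ _ hBh hden, mact, mdenom]
  simp only [hent, mdenom]
  congr 1 <;> ring

lemma hasDerivAt_mact {z : ℂ} (hB : mdenom γ z ≠ 0) :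
    HasDerivAt (mact γ) (1 / mdenom γ z ^ 2) z := by
  have hN : HasDerivAt (fun z : ℂ => (γ.1 0 0 : ℂ) * z + (γ.1 0 1 : ℂ)) (γ.1 0 0 : ℂ) z := by
    simpa using ((hasDerivAt_id z).const_mul (γ.1 0 0 : ℂ)).add_const (γ.1 0 1 : ℂ)
  have hD : HasDerivAt (fun z : ℂ => mdenom γ z) (γ.1 1 0 : ℂ) z := by
    simp only [mdenom]
    simpa using ((hasDerivAt_id z).const_mul (γ.1 1 0 : ℂ)).add_const (γ.1 1 1 : ℂ)
  have := hN.div hD hB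
  refine this.congr_deriv ?_
  rw [div_eq_div_iff (pow_ne_zero 2 hB) (pow_ne_zero 2 hB)]
  simp only [mdenom]
  linear_combination (((γ.1 1 0 : ℂ) * z + γ.1 1 1) ^ 2) * detC γ
end moebius

/-! ### Branch-of-logarithm lemmas -/

/-- adjusted logarithm: branch `arg ∈ [-π, π)`. -/
noncomputable def logL (C : ℂ) : ℂ :=
  if C.arg = Real.pi then Complex.log C - 2 * (Real.pi : ℂ) * I else Complex.log C

lemma cpowLHP_eq {C : ℂ} (hC : C ≠ 0) (s : ℂ) : cpowLHP C s = Complex.exp (s * logL C) := by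
  rw [cpowLHP, logL]
  split
  · rfl
  · rw [Complex.cpow_def_of_ne_zero hC, mul_comm]

lemma exp_logL {C : ℂ} (hC : C ≠ 0) : Complex.exp (logL C) = C := by
  rw [logL]
  split
  · rw [Complex.exp_sub, Complex.exp_log hC]
    norm_num [Complex.exp_two_pi_mul_I]
  · exact Complex.exp_log hC

lemma im_logL (C : ℂ) : (logL C).im = if C.arg = Real.pi then -Real.pi else C.arg := by
  rw [logL]
  split <;> rename_i h
  · simp [Complex.sub_im, Complex.log_im, h]
    ring
  · exact Complex.log_im _

lemma arg_pos_of_im_pos {z : ℂ} (hz : 0 < z.im) : 0 < z.arg := by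
  rcases lt_or_eq_of_le (Complex.arg_nonneg_iff.mpr hz.le) with h | h
  · exact h
  · exfalso
    have := Complex.arg_eq_zero_iff.mp h.symm
    linarith [this.2]

lemma arg_lt_pi_of_im_pos {z : ℂ} (hz : 0 < z.im) : z.arg < Real.pi := by
  rcases lt_or_eq_of_le (Complex.arg_le_pi z) with h | h
  · exact h
  · exfalso
    have := Complex.arg_eq_pi_iff.mp h
    linarith [this.2]

lemma ne_zero_of_im_pos {z : ℂ} (hz : 0 < z.im) : z ≠ 0 := by
  intro h; rw [h] at hz; simp at hz

lemma log_add_branch {A B C D : ℂ} (hD : 0 < D.im) (hA : 0 < A.im) (hB : B ≠ 0) (hC : C ≠ 0)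
    (hprod : A = D * B * C)
    (hlo : -Real.pi < B.arg + (logL C).im) (hhi : B.arg + (logL C).im ≤ Real.pi) :
    Complex.log A = Complex.log D + Complex.log B + logL C := by
  have hDne : D ≠ 0 := ne_zero_of_im_pos hD
  set S := Complex.log D + Complex.log B + logL C with hS
  have hexp : Complex.exp S = A := by
    rw [hS, Complex.exp_add, Complex.exp_add, Complex.exp_log hDne, Complex.exp_log hB,
      exp_logL hC, hprod]
  have hSim : S.im = D.arg + (B.arg + (logL C).im) := by
    simp [hS, Complex.add_im, Complex.log_im]
    ring
  have hD1 : 0 < D.arg := arg_pos_of_im_pos hD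
  have hD2 : D.arg < Real.pi := arg_lt_pi_of_im_pos hD
  have hlo2 : -Real.pi < S.im := by rw [hSim]; linarith
  rcases le_or_gt S.im Real.pi with h | h
  · rw [← hexp, Complex.log_exp hlo2 h]
  · exfalso
    have h2 : Complex.exp (S - 2 * (Real.pi : ℂ) * I) = A := by
      rw [Complex.exp_sub, hexp]
      norm_num [Complex.exp_two_pi_mul_I]
    have him : (S - 2 * (Real.pi : ℂ) * I).im = S.im - 2 * Real.pi := by
      simp
    have hub : S.im < 2 * Real.pi := by rw [hSim]; linarith
    have hlog : Complex.log A = S - 2 * (Real.pi : ℂ) * I := by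
      rw [← h2, Complex.log_exp (by rw [him]; linarith) (by rw [him]; linarith [Real.pi_pos])]
    have : A.arg = S.im - 2 * Real.pi := by
      rw [← Complex.log_im, hlog, him]
    linarith [arg_pos_of_im_pos hA, this]

lemma cpow_branch {A B C D : ℂ} (s : ℂ) (hD : 0 < D.im) (hA : 0 < A.im) (hB : B ≠ 0) (hC : C ≠ 0)
    (hprod : A = D * B * C)
    (hlo : -Real.pi < B.arg + (logL C).im) (hhi : B.arg + (logL C).im ≤ Real.pi) :
    D ^ s * B ^ s * cpowLHP C s = A ^ s := by
  have hDne : D ≠ 0 := ne_zero_of_im_pos hD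
  have hAne : A ≠ 0 := ne_zero_of_im_pos hA
  rw [Complex.cpow_def_of_ne_zero hDne, Complex.cpow_def_of_ne_zero hB, cpowLHP_eq hC,
    Complex.cpow_def_of_ne_zero hAne, log_add_branch hD hA hB hC hprod hlo hhi,
    ← Complex.exp_add, ← Complex.exp_add]
  congr 1
  ring

lemma argsum_bounds {c d : ℝ} {w t : ℂ} (hw : 0 < w.im) (ht : t.im < 0)
    (hcd : c = 0 → d ≠ 0) :
    -Real.pi < ((c : ℂ) * w + d).arg + (logL ((c : ℂ) * t + d)).im ∧
      ((c : ℂ) * w + d).arg + (logL ((c : ℂ) * t + d)).im ≤ Real.pi := by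
  have hBim : ((c : ℂ) * w + d).im = c * w.im := by simp
  have hCim : ((c : ℂ) * t + d).im = c * t.im := by simp
  rcases lt_trichotomy c 0 with hc | hc | hc
  · have hB : ((c : ℂ) * w + d).im < 0 := by rw [hBim]; exact mul_neg_of_neg_of_pos hc hw
    have hC : 0 < ((c : ℂ) * t + d).im := by rw [hCim]; exact mul_pos_of_neg_of_neg hc ht
    have h1 : ((c : ℂ) * w + d).arg < 0 := Complex.arg_neg_iff.mpr hB
    have h2 := Complex.neg_pi_lt_arg ((c : ℂ) * w + d)
    have h3 : (logL ((c : ℂ) * t + d)).im = ((c : ℂ) * t + d).arg := by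
      rw [im_logL, if_neg]
      intro h
      have := Complex.arg_eq_pi_iff.mp h
      linarith [this.2]
    constructor
    · rw [h3]; linarith [arg_pos_of_im_pos hC]
    · rw [h3]; linarith [arg_lt_pi_of_im_pos hC]
  · subst hc
    have hd := hcd rfl
    simp only [ofReal_zero, zero_mul, zero_add]
    rcases lt_or_gt_of_ne hd with hd' | hd'
    · have harg : Complex.arg (d : ℂ) = Real.pi := by
        rw [Complex.arg_ofReal_of_neg hd']
      have hL : (logL (d : ℂ)).im = -Real.pi := by rw [im_logL, if_pos harg]
      rw [harg, hL]
      constructor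
      · linarith [Real.pi_pos]
      · linarith [Real.pi_pos]
    · have harg : Complex.arg (d : ℂ) = 0 := by
        rw [Complex.arg_ofReal_of_nonneg hd'.le]
      have hL : (logL (d : ℂ)).im = 0 := by rw [im_logL, if_neg (by rw [harg]; positivity), harg]
      rw [harg, hL]
      constructor
      · linarith [Real.pi_pos]
      · linarith [Real.pi_pos]
  · have hB : 0 < ((c : ℂ) * w + d).im := by rw [hBim]; exact mul_pos hc hw
    have hC : ((c : ℂ) * t + d).im < 0 := by rw [hCim]; exact mul_neg_of_pos_of_neg hc ht
    have h3 : (logL ((c : ℂ) * t + d)).im = ((c : ℂ) * t + d).arg := by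
      rw [im_logL, if_neg]
      intro h
      have := Complex.arg_eq_pi_iff.mp h
      linarith [this.2]
    constructor
    · rw [h3]; linarith [arg_pos_of_im_pos hB, Complex.neg_pi_lt_arg ((c : ℂ) * t + d)]
    · rw [h3]; linarith [arg_lt_pi_of_im_pos hB, Complex.arg_neg_iff.mpr hC]

/-! ### The main theorem -/

/-- with `Q_F t = ∫_{z₀}^{t̄} (z-t)^(r-2) F z dz` for `t` in the lower
half-plane, one has `Q_F|_{v,2-r}(γ - 1) = ψ^{z₀}_{F,γ}` for every `γ ∈ Γ`, where
`ψ^{z₀}_{F,γ} t = ∫_{γ⁻¹z₀}^{z₀} (z-t)^(r-2) F z dz`. -/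
theorem QF_coboundary_relation (r : ℂ)
    (Γ : Subgroup (Matrix.SpecialLinearGroup (Fin 2) ℝ))
    (v : Matrix.SpecialLinearGroup (Fin 2) ℝ → ℂ) (hv : ∀ γ ∈ Γ, v γ ≠ 0)
    (F : ℂ → ℂ) (hF : DifferentiableOn ℂ F {z : ℂ | 0 < z.im})
    (hauto : ∀ γ ∈ Γ, ∀ z : ℂ, 0 < z.im →
        F (mact γ z) = v γ * mdenom γ z ^ r * F z)
    (z₀ : ℂ) (hz₀ : 0 < z₀.im) :
    ∀ γ ∈ Γ, ∀ t : ℂ, t.im < 0 →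
      (v γ)⁻¹ * cpowLHP (mdenom γ t) (r - 2) *
          segInt r F z₀ (starRingEnd ℂ (mact γ t)) (mact γ t) -
        segInt r F z₀ (starRingEnd ℂ t) t =
      segInt r F (mact γ⁻¹ z₀) z₀ t := by
  intro γ hγ t ht
  have htne : t.im ≠ 0 := ne_of_lt ht
  have hBt : mdenom γ t ≠ 0 := mdenom_ne_zero γ htne
  set τ := mact γ t with hτdef
  have hτ : τ.im < 0 := by
    rw [hτdef, mact_im γ htne]
    exact div_neg_of_neg_of_pos ht (Complex.normSq_pos.mpr hBt)
  have hct : 0 < (starRingEnd ℂ t).im := by rw [Complex.conj_im]; linarith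
  have hcτ : 0 < (starRingEnd ℂ τ).im := by rw [Complex.conj_im]; linarith
  have hq : 0 < (mact γ⁻¹ z₀).im := by
    rw [mact_im γ⁻¹ (ne_of_gt hz₀)]
    exact div_pos hz₀ (Complex.normSq_pos.mpr (mdenom_ne_zero γ⁻¹ (ne_of_gt hz₀)))
  have hγq : mact γ (mact γ⁻¹ z₀) = z₀ := by
    rw [← mact_mul γ γ⁻¹ (ne_of_gt hz₀), mul_inv_cancel, mact_one]
  have hconjτ : starRingEnd ℂ τ = mact γ (starRingEnd ℂ t) := (mact_conj γ t).symm
  set g₁ : ℂ → ℂ := fun z => (z - t) ^ (r - 2) * F z with hg₁def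
  set g₂ : ℂ → ℂ := fun z => (z - τ) ^ (r - 2) * F z with hg₂def
  have hg₁d : DifferentiableOn ℂ g₁ {z : ℂ | 0 < z.im} := integrand_diff hF ht r
  have hg₂d : DifferentiableOn ℂ g₂ {z : ℂ | 0 < z.im} := integrand_diff hF hτ r
  set G₁ : ℂ → ℂ := primH g₁ z₀ with hG₁def
  set G₂ : ℂ → ℂ := primH g₂ z₀ with hG₂def
  have hG₁ : ∀ z : ℂ, 0 < z.im → HasDerivAt G₁ (g₁ z) z :=
    fun z hz => primH_hasDerivAt hg₁d hz₀ hz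
  have hG₂ : ∀ z : ℂ, 0 < z.im → HasDerivAt G₂ (g₂ z) z :=
    fun z hz => primH_hasDerivAt hg₂d hz₀ hz
  set L := cpowLHP (mdenom γ t) (r - 2) with hLdef
  set H : ℂ → ℂ := fun w => (v γ)⁻¹ * L * G₂ (mact γ w) with hHdef
  have hvγ := hv γ hγ
  have hcd : γ.1 1 0 = 0 → γ.1 1 1 ≠ 0 := by
    intro h0 h1
    have := detR γ
    rw [h0, h1] at this; simp at this
  have hH : ∀ w : ℂ, 0 < w.im → HasDerivAt H (g₁ w) w := by
    intro w hw
    have hwne : w.im ≠ 0 := ne_of_gt hw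
    have hBw : mdenom γ w ≠ 0 := mdenom_ne_zero γ hwne
    have hmw : 0 < (mact γ w).im := by
      rw [mact_im γ hwne]; exact div_pos hw (Complex.normSq_pos.mpr hBw)
    have h2 := ((hG₂ _ hmw).comp w (hasDerivAt_mact γ hBw)).const_mul ((v γ)⁻¹ * L)
    have h3 : HasDerivAt H ((v γ)⁻¹ * L * (g₂ (mact γ w) * (1 / mdenom γ w ^ 2))) w := h2
    have hDim : 0 < (mact γ w - τ).im := by
      have : (mact γ w - τ).im = (mact γ w).im - τ.im := by simp
      rw [this]; linarith
    have hAim : 0 < (w - t).im := by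
      have : (w - t).im = w.im - t.im := by simp
      rw [this]; linarith
    have hprod : w - t = (mact γ w - τ) * mdenom γ w * mdenom γ t := by
      rw [hτdef, mact_sub γ hwne htne]
      field_simp
    have hbounds := argsum_bounds (c := γ.1 1 0) (d := γ.1 1 1) hw ht hcd
    have hbranch := cpow_branch (r - 2) hDim hAim hBw hBt hprod hbounds.1 hbounds.2
    have hFw := hauto γ hγ w hw
    have hpow : (mdenom γ w) ^ (r - 2) = mdenom γ w ^ r / mdenom γ w ^ 2 := by
      rw [Complex.cpow_sub _ _ hBw, show ((2:ℂ)) = ((2:ℕ):ℂ) by norm_num,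
        Complex.cpow_natCast]
    convert h3 using 1
    simp only [hg₁def, hg₂def]
    rw [hFw, ← hbranch, hpow]
    have hvv : (v γ)⁻¹ * v γ = 1 := inv_mul_cancel₀ hvγ
    field_simp
    ring
  have e2 : segInt r F z₀ (starRingEnd ℂ τ) τ = G₂ (starRingEnd ℂ τ) - G₂ z₀ :=
    segInt_eq_sub (fun z _ => rfl) hg₂d.continuousOn hG₂ hz₀ hcτ
  have e3 : segInt r F z₀ (starRingEnd ℂ t) t = G₁ (starRingEnd ℂ t) - G₁ z₀ :=
    segInt_eq_sub (fun z _ => rfl) hg₁d.continuousOn hG₁ hz₀ hct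
  have e4 : segInt r F (mact γ⁻¹ z₀) z₀ t = G₁ z₀ - G₁ (mact γ⁻¹ z₀) :=
    segInt_eq_sub (fun z _ => rfl) hg₁d.continuousOn hG₁ hq hz₀
  have e1 : segInt r F (mact γ⁻¹ z₀) (starRingEnd ℂ t) t =
      H (starRingEnd ℂ t) - H (mact γ⁻¹ z₀) :=
    segInt_eq_sub (fun z _ => rfl) hg₁d.continuousOn hH hq hct
  have e1' : segInt r F (mact γ⁻¹ z₀) (starRingEnd ℂ t) t =
      G₁ (starRingEnd ℂ t) - G₁ (mact γ⁻¹ z₀) :=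
    segInt_eq_sub (fun z _ => rfl) hg₁d.continuousOn hG₁ hq hct
  have hHvals : H (starRingEnd ℂ t) - H (mact γ⁻¹ z₀) =
      (v γ)⁻¹ * L * (G₂ (starRingEnd ℂ τ) - G₂ z₀) := by
    simp only [hHdef]
    rw [hconjτ, hγq]
    ring
  have hkey : (v γ)⁻¹ * L * (G₂ (starRingEnd ℂ τ) - G₂ z₀) =
      G₁ (starRingEnd ℂ t) - G₁ (mact γ⁻¹ z₀) :=
    hHvals.symm.trans (e1.symm.trans e1')
  rw [e2, e3, e4]
  linear_combination hkey
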